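/- arXiv:2108.10401 — 2 statements merged into one kernel-verified Lean document; each statement's English description precedes it below -/
import Mathlib

section
/- Suppose det b ≠ 0. Then for every positive integer q, all functions f₁,f₂ : (ℤ/qℤ)⁴ → ℂ, and every r ∈ (ℤ/qℤ)*: |T_{f₁,f₂}(r)| ≤ gcd(q, det b)² ‖f₁‖₂ ‖f₂‖₂. -/
/- STATEMENT 4: Suppose det b ≠ 0. Then for every positive integer q, all functions
f₁,f₂ : (ℤ/qℤ)⁴ → ℂ, and every r ∈ (ℤ/qℤ)*:
|T_{f₁,f₂}(r)| ≤ gcd(q, det b)² ‖f₁‖₂ ‖f₂‖₂. -/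

open Matrix

noncomputable section

/-- The quadratic form Q(x,y) = xᵀax + xᵀby + yᵀcy over a commutative ring. -/
def Qform {R : Type*} [CommRing R] (a b c : Matrix (Fin 4) (Fin 4) R)
    (x y : Fin 4 → R) : R :=
  x ⬝ᵥ (a *ᵥ x) + x ⬝ᵥ (b *ᵥ y) + y ⬝ᵥ (c *ᵥ y)

/-- e_q(t) := e^{2πit/q} for t ∈ ℤ/qℤ. -/
def eZMod (q : ℕ) (t : ZMod q) : ℂ :=
  Complex.exp (2 * Real.pi * Complex.I * (t.val : ℂ) / (q : ℂ))

/-- T_{f₁,f₂}(r) := q² 𝔼_{x,y ∈ (ℤ/qℤ)⁴} f₁(x) f₂(y) e_q(r Q(x,y)). -/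
def Tsum (q : ℕ) [NeZero q] (a b c : Matrix (Fin 4) (Fin 4) ℤ)
    (f₁ f₂ : (Fin 4 → ZMod q) → ℂ) (r : (ZMod q)ˣ) : ℂ :=
  (q : ℂ) ^ 2 * ((∑ x : Fin 4 → ZMod q, ∑ y : Fin 4 → ZMod q,
    f₁ x * f₂ y * eZMod q ((r : ZMod q) *
      Qform (a.map (Int.cast : ℤ → ZMod q)) (b.map (Int.cast : ℤ → ZMod q))
        (c.map (Int.cast : ℤ → ZMod q)) x y)) / (q : ℂ) ^ 8)

/-- ‖f‖₂ := (𝔼_x |f(x)|²)^{1/2}. -/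
def l2norm (q : ℕ) [NeZero q] (f : (Fin 4 → ZMod q) → ℂ) : ℝ :=
  Real.sqrt ((∑ x : Fin 4 → ZMod q, ‖f x‖ ^ 2) / (q : ℝ) ^ 4)

/-! ### Auxiliary lemmas -/

section Aux

variable {q : ℕ} [NeZero q]

lemma eZMod_eq_stdAddChar (t : ZMod q) : eZMod q t = ZMod.stdAddChar t := by
  have h : ((t.val : ℤ) : ZMod q) = t := by simp
  rw [eZMod]
  conv_rhs => rw [← h, ZMod.stdAddChar_coe]
  push_cast
  ring_nf

lemma norm_stdAddChar (t : ZMod q) : ‖ZMod.stdAddChar t‖ = 1 := by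
  rw [ZMod.stdAddChar_apply]
  exact Circle.norm_coe _

lemma conj_stdAddChar (t : ZMod q) :
    (starRingEnd ℂ) (ZMod.stdAddChar t) = ZMod.stdAddChar (-t) := by
  rw [ZMod.stdAddChar_apply, ZMod.stdAddChar_apply, AddChar.map_neg_eq_inv,
    Circle.coe_inv_eq_conj]

lemma addChar_map_sum {ι M A : Type*} [CommMonoid M] [AddCommMonoid A] (ψ : AddChar A M)
    (s : Finset ι) (v : ι → A) : ψ (∑ i ∈ s, v i) = ∏ i ∈ s, ψ (v i) := by
  classical
  induction s using Finset.induction with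
  | empty => simp
  | insert _ _ h ih => rw [Finset.sum_insert h, Finset.prod_insert h, ψ.map_add_eq_mul, ih]

lemma sum_stdAddChar_mul (t : ZMod q) :
    ∑ x : ZMod q, ZMod.stdAddChar (t * x) = if t = 0 then (q : ℂ) else 0 := by
  split_ifs with h
  · simp [h]
  · exact AddChar.sum_eq_zero_of_ne_one (ZMod.isPrimitive_stdAddChar q h)

lemma sum_stdAddChar_dot (w : Fin 4 → ZMod q) :
    ∑ x : Fin 4 → ZMod q, ZMod.stdAddChar (x ⬝ᵥ w) = if w = 0 then (q : ℂ) ^ 4 else 0 := by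
  have : ∀ x : Fin 4 → ZMod q, ZMod.stdAddChar (x ⬝ᵥ w)
      = ∏ i, ZMod.stdAddChar (w i * x i) := by
    intro x
    rw [dotProduct, addChar_map_sum]
    exact Finset.prod_congr rfl fun i _ => by rw [mul_comm]
  simp_rw [this]
  rw [← Fintype.prod_sum (κ := fun _ : Fin 4 => ZMod q) (f := fun i j => ZMod.stdAddChar (w i * j))]
  simp_rw [sum_stdAddChar_mul]
  split_ifs with h
  · subst h
    simp
  · obtain ⟨i, hi⟩ : ∃ i, w i ≠ 0 := by
      by_contra hcon
      push_neg at hcon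
      exact h (funext hcon)
    exact Finset.prod_eq_zero (Finset.mem_univ i) (by simp [hi])

lemma card_mul_zero_le (d : ℤ) :
    (Finset.univ.filter fun t : ZMod q => (d : ZMod q) * t = 0).card ≤ Nat.gcd q d.natAbs := by
  classical
  set D := d.natAbs with hD
  set g := Nat.gcd q D with hgdef
  set m := q / g with hmdef
  have hq : 0 < q := Nat.pos_of_ne_zero (NeZero.ne q)
  have hg : 0 < g := Nat.gcd_pos_of_pos_left _ hq
  have hmg : m * g = q := Nat.div_mul_cancel (Nat.gcd_dvd_left q D)
  have hm : 0 < m := by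
    rcases Nat.eq_zero_or_pos m with h | h
    · rw [h, zero_mul] at hmg; omega
    · exact h
  have key : ∀ t : ZMod q, (d : ZMod q) * t = 0 → m ∣ t.val := by
    intro t ht
    have h1 : ((d * (t.val : ℤ) : ℤ) : ZMod q) = 0 := by
      push_cast
      rw [ZMod.natCast_val, ZMod.cast_id]
      exact ht
    have h2 : (q : ℤ) ∣ d * (t.val : ℤ) := (ZMod.intCast_zmod_eq_zero_iff_dvd _ q).mp h1
    have h3 : q ∣ D * t.val := by
      have h2' := Int.natAbs_dvd_natAbs.mpr h2
      rw [Int.natAbs_mul, Int.natAbs_natCast, Int.natAbs_natCast] at h2'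
      exact h2'
    have co : Nat.Coprime m (D / g) := Nat.coprime_div_gcd_div_gcd hg
    have h4 : m ∣ (D / g) * t.val := by
      have hD' : (D / g) * g = D := Nat.div_mul_cancel (Nat.gcd_dvd_right q D)
      rw [← Nat.mul_dvd_mul_iff_right hg, hmg]
      have heq : (D / g) * t.val * g = D * t.val := by rw [mul_right_comm, hD']
      rw [heq]
      exact h3
    exact co.dvd_of_dvd_mul_left h4
  refine le_trans (Finset.card_le_card_of_injOn (t := Finset.range g) (fun t => t.val / m) ?_ ?_)
    (le_of_eq (Finset.card_range g))
  · intro t ht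
    rw [Finset.mem_coe, Finset.mem_filter] at ht
    rw [Finset.mem_coe, Finset.mem_range, Nat.div_lt_iff_lt_mul hm]
    calc t.val < q := ZMod.val_lt t
    _ = g * m := by rw [mul_comm] at hmg; exact hmg.symm
  · intro t₁ h₁ t₂ h₂ hval
    simp only [Finset.mem_coe, Finset.mem_filter] at h₁ h₂
    have e₁ : t₁.val = m * (t₁.val / m) := (Nat.mul_div_cancel' (key t₁ h₁.2)).symm
    have e₂ : t₂.val = m * (t₂.val / m) := (Nat.mul_div_cancel' (key t₂ h₂.2)).symm
    simp only at hval
    have : t₁.val = t₂.val := by rw [e₁, e₂, hval]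
    exact ZMod.val_injective q this

lemma card_ker_le (b : Matrix (Fin 4) (Fin 4) ℤ) :
    (Finset.univ.filter fun z : Fin 4 → ZMod q =>
        (b.map (Int.cast : ℤ → ZMod q)) *ᵥ z = 0).card ≤ (Nat.gcd q b.det.natAbs) ^ 4 := by
  classical
  set B := b.map (Int.cast : ℤ → ZMod q) with hB
  set T : Finset (ZMod q) :=
    Finset.univ.filter (fun t : ZMod q => ((b.det : ℤ) : ZMod q) * t = 0) with hT
  have hdet : B.det = ((b.det : ℤ) : ZMod q) := by
    rw [hB, show b.map (Int.cast : ℤ → ZMod q) = (Int.castRingHom (ZMod q)).mapMatrix b from rfl,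
      ← RingHom.map_det]
    rfl
  have hsub : (Finset.univ.filter fun z : Fin 4 → ZMod q => B *ᵥ z = 0)
      ⊆ Fintype.piFinset (fun _ : Fin 4 => T) := by
    intro z hz
    rw [Fintype.mem_piFinset]
    intro i
    rw [hT, Finset.mem_filter]
    refine ⟨Finset.mem_univ _, ?_⟩
    have hz' : B *ᵥ z = 0 := (Finset.mem_filter.mp hz).2
    have h1 : B.det • z = 0 := by
      have h2 := congrArg (fun v => B.adjugate *ᵥ v) hz'
      simpa [Matrix.mulVec_mulVec, Matrix.adjugate_mul, Matrix.smul_mulVec,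
        Matrix.one_mulVec] using h2
    have := congrFun h1 i
    rw [Pi.smul_apply, smul_eq_mul, hdet] at this
    exact this
  calc (Finset.univ.filter fun z : Fin 4 → ZMod q => B *ᵥ z = 0).card
      ≤ (Fintype.piFinset (fun _ : Fin 4 => T)).card := Finset.card_le_card hsub
    _ = T.card ^ 4 := by simp [Fintype.card_piFinset]
    _ ≤ (Nat.gcd q b.det.natAbs) ^ 4 := Nat.pow_le_pow_left (card_mul_zero_le b.det) 4

open Finset in
lemma keyB (b : Matrix (Fin 4) (Fin 4) ℤ) (A C : Matrix (Fin 4) (Fin 4) (ZMod q))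
    (r : (ZMod q)ˣ) (f₂ : (Fin 4 → ZMod q) → ℂ)
    (hK : (Finset.univ.filter fun z : Fin 4 → ZMod q =>
        (b.map (Int.cast : ℤ → ZMod q)) *ᵥ z = 0).card ≤ (Nat.gcd q b.det.natAbs) ^ 4) :
    ∑ x : Fin 4 → ZMod q, ‖∑ y : Fin 4 → ZMod q, f₂ y * ZMod.stdAddChar ((r : ZMod q) *
        Qform A (b.map (Int.cast : ℤ → ZMod q)) C x y)‖ ^ 2
      ≤ (q : ℝ) ^ 4 * (Nat.gcd q b.det.natAbs : ℝ) ^ 4 * ∑ y, ‖f₂ y‖ ^ 2 := by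
  classical
  set B := b.map (Int.cast : ℤ → ZMod q) with hB
  set ψ : AddChar (ZMod q) ℂ := ZMod.stdAddChar with hψ
  set G : (Fin 4 → ZMod q) → ℂ :=
    fun x => ∑ y, f₂ y * ψ ((r : ZMod q) * Qform A B C x y) with hG
  set F2 : ℝ := ∑ y, ‖f₂ y‖ ^ 2 with hF2
  have hF2nonneg : 0 ≤ F2 := Finset.sum_nonneg fun _ _ => sq_nonneg _
  set E : (Fin 4 → ZMod q) → (Fin 4 → ZMod q) → ZMod q :=
    fun y y' => (r : ZMod q) * (y ⬝ᵥ (C *ᵥ y) - y' ⬝ᵥ (C *ᵥ y')) with hE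
  have hQdiff : ∀ x y y' : Fin 4 → ZMod q,
      (r : ZMod q) * Qform A B C x y - (r : ZMod q) * Qform A B C x y'
        = x ⬝ᵥ ((r : ZMod q) • (B *ᵥ (y - y'))) + E y y' := by
    intro x y y'
    simp only [Qform, hE, Matrix.mulVec_sub, dotProduct_sub, dotProduct_smul, smul_eq_mul]
    ring
  have hw0 : ∀ v : Fin 4 → ZMod q, ((r : ZMod q) • v = 0 ↔ v = 0) := by
    intro v
    constructor
    · intro h
      funext i
      have h2 := congrFun h i
      rw [Pi.smul_apply, smul_eq_mul] at h2
      simpa using (Units.mul_right_eq_zero r).mp h2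
    · intro h
      rw [h, smul_zero]
  have step2 : ∑ x, G x * (starRingEnd ℂ) (G x)
      = ∑ y, ∑ y', (f₂ y * (starRingEnd ℂ) (f₂ y') * ψ (E y y'))
          * (if B *ᵥ (y - y') = 0 then (q : ℂ) ^ 4 else 0) := by
    have expand : ∀ x, G x * (starRingEnd ℂ) (G x)
        = ∑ y, ∑ y', (f₂ y * (starRingEnd ℂ) (f₂ y') * ψ (E y y'))
            * ψ (x ⬝ᵥ ((r : ZMod q) • (B *ᵥ (y - y')))) := by
      intro x
      rw [hG]
      rw [map_sum, Finset.sum_mul_sum]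
      refine Finset.sum_congr rfl fun y _ => Finset.sum_congr rfl fun y' _ => ?_
      rw [RingHom.map_mul, conj_stdAddChar]
      have hkey : ψ ((r : ZMod q) * Qform A B C x y) * ψ (-((r : ZMod q) * Qform A B C x y'))
          = ψ (x ⬝ᵥ ((r : ZMod q) • (B *ᵥ (y - y')))) * ψ (E y y') := by
        rw [← ψ.map_add_eq_mul, ← sub_eq_add_neg, hQdiff, ψ.map_add_eq_mul]
      calc f₂ y * ψ ((r : ZMod q) * Qform A B C x y)
            * ((starRingEnd ℂ) (f₂ y') * ψ (-((r : ZMod q) * Qform A B C x y')))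
          = f₂ y * (starRingEnd ℂ) (f₂ y')
            * (ψ ((r : ZMod q) * Qform A B C x y) * ψ (-((r : ZMod q) * Qform A B C x y'))) := by
            ring
        _ = _ := by rw [hkey]; ring
    simp_rw [expand]
    rw [Finset.sum_comm]
    refine Finset.sum_congr rfl fun y _ => ?_
    rw [Finset.sum_comm]
    refine Finset.sum_congr rfl fun y' _ => ?_
    rw [← Finset.mul_sum, sum_stdAddChar_dot]
    simp only [hw0]
  have h0 : ((∑ x, ‖G x‖ ^ 2 : ℝ) : ℂ) = ∑ x, G x * (starRingEnd ℂ) (G x) := by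
    push_cast
    refine Finset.sum_congr rfl fun x _ => ?_
    rw [Complex.mul_conj']
  have h1 : ∑ x, ‖G x‖ ^ 2 = ‖∑ x, G x * (starRingEnd ℂ) (G x)‖ := by
    rw [← h0, Complex.norm_real, Real.norm_eq_abs,
      abs_of_nonneg (Finset.sum_nonneg fun _ _ => sq_nonneg _)]
  have step3 : ‖∑ y, ∑ y', (f₂ y * (starRingEnd ℂ) (f₂ y') * ψ (E y y'))
        * (if B *ᵥ (y - y') = 0 then (q : ℂ) ^ 4 else 0)‖
      ≤ ∑ y, ∑ y', ‖f₂ y‖ * ‖f₂ y'‖ * (if B *ᵥ (y - y') = 0 then (q : ℝ) ^ 4 else 0) := by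
    refine (norm_sum_le _ _).trans (Finset.sum_le_sum fun y _ => ?_)
    refine (norm_sum_le _ _).trans (Finset.sum_le_sum fun y' _ => ?_)
    refine le_of_eq ?_
    split_ifs with h
    · rw [norm_mul, norm_mul, norm_mul, norm_stdAddChar, RCLike.norm_conj, mul_one,
        norm_pow, Complex.norm_natCast]
    · simp
  have hCS : ∀ z : Fin 4 → ZMod q, ∑ y', ‖f₂ (z + y')‖ * ‖f₂ y'‖ ≤ F2 := by
    intro z
    have h1' := Finset.sum_mul_sq_le_sq_mul_sq Finset.univ
      (fun y' : Fin 4 → ZMod q => ‖f₂ (z + y')‖) (fun y' => ‖f₂ y'‖)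
    have h2' : ∑ y' : Fin 4 → ZMod q, ‖f₂ (z + y')‖ ^ 2 = F2 :=
      Fintype.sum_equiv (Equiv.addLeft z) _ _ (fun y' => rfl)
    rw [h2', hF2.symm] at h1'
    have hnn : 0 ≤ ∑ y' : Fin 4 → ZMod q, ‖f₂ (z + y')‖ * ‖f₂ y'‖ :=
      Finset.sum_nonneg fun _ _ => mul_nonneg (norm_nonneg _) (norm_nonneg _)
    nlinarith [h1', hnn, hF2nonneg]
  have step4 : ∑ y, ∑ y', ‖f₂ y‖ * ‖f₂ y'‖ * (if B *ᵥ (y - y') = 0 then (q : ℝ) ^ 4 else 0)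
      ≤ (q : ℝ) ^ 4 * (Nat.gcd q b.det.natAbs : ℝ) ^ 4 * F2 := by
    have reidx : ∑ y : Fin 4 → ZMod q, ∑ y' : Fin 4 → ZMod q,
        ‖f₂ y‖ * ‖f₂ y'‖ * (if B *ᵥ (y - y') = 0 then (q : ℝ) ^ 4 else 0)
        = ∑ z : Fin 4 → ZMod q, ∑ y' : Fin 4 → ZMod q,
          ‖f₂ (z + y')‖ * ‖f₂ y'‖ * (if B *ᵥ z = 0 then (q : ℝ) ^ 4 else 0) := by
      rw [Finset.sum_comm]
      conv_rhs => rw [Finset.sum_comm]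
      refine Finset.sum_congr rfl fun y' _ => ?_
      refine (Fintype.sum_equiv (Equiv.addRight y')
        (fun z => ‖f₂ (z + y')‖ * ‖f₂ y'‖ * (if B *ᵥ z = 0 then (q : ℝ) ^ 4 else 0))
        (fun y => ‖f₂ y‖ * ‖f₂ y'‖ * (if B *ᵥ (y - y') = 0 then (q : ℝ) ^ 4 else 0))
        (fun z => by simp [Equiv.coe_addRight, add_sub_cancel_right])).symm
    rw [reidx]
    have bound1 : ∀ z : Fin 4 → ZMod q,
        ∑ y' : Fin 4 → ZMod q, ‖f₂ (z + y')‖ * ‖f₂ y'‖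
            * (if B *ᵥ z = 0 then (q : ℝ) ^ 4 else 0)
          ≤ (if B *ᵥ z = 0 then (q : ℝ) ^ 4 else 0) * F2 := by
      intro z
      rw [← Finset.sum_mul]
      split_ifs with h
      · rw [mul_comm]
        refine mul_le_mul_of_nonneg_left (hCS z) (by positivity)
      · simp
    refine le_trans (Finset.sum_le_sum fun z _ => bound1 z) ?_
    obtain ⟨K, hKcard⟩ : ∃ K : ℕ,
        (Finset.univ.filter fun z : Fin 4 → ZMod q => B *ᵥ z = 0).card = K := ⟨_, rfl⟩
    have this2 : ∑ z : Fin 4 → ZMod q, (if B *ᵥ z = 0 then (q : ℝ) ^ 4 else 0) * F2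
        = (K : ℝ) * ((q : ℝ) ^ 4 * F2) := by
      simp_rw [ite_mul, zero_mul]
      rw [← Finset.sum_filter, Finset.sum_const, hKcard, nsmul_eq_mul]
    rw [this2]
    have hcard : (K : ℝ) ≤ (Nat.gcd q b.det.natAbs : ℝ) ^ 4 := by
      have hK' : K ≤ Nat.gcd q b.det.natAbs ^ 4 := hKcard ▸ hK
      exact_mod_cast hK'
    have hpos : (0 : ℝ) ≤ (q : ℝ) ^ 4 * F2 :=
      mul_nonneg (by positivity) hF2nonneg
    calc (K : ℝ) * ((q : ℝ) ^ 4 * F2)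
        ≤ (Nat.gcd q b.det.natAbs : ℝ) ^ 4 * ((q : ℝ) ^ 4 * F2) :=
          mul_le_mul_of_nonneg_right hcard hpos
      _ = (q : ℝ) ^ 4 * (Nat.gcd q b.det.natAbs : ℝ) ^ 4 * F2 := by ring
  calc ∑ x, ‖G x‖ ^ 2 = ‖∑ x, G x * (starRingEnd ℂ) (G x)‖ := h1
    _ = ‖∑ y, ∑ y', (f₂ y * (starRingEnd ℂ) (f₂ y') * ψ (E y y'))
          * (if B *ᵥ (y - y') = 0 then (q : ℂ) ^ 4 else 0)‖ := by rw [step2]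
    _ ≤ ∑ y, ∑ y', ‖f₂ y‖ * ‖f₂ y'‖ * (if B *ᵥ (y - y') = 0 then (q : ℝ) ^ 4 else 0) := step3
    _ ≤ (q : ℝ) ^ 4 * (Nat.gcd q b.det.natAbs : ℝ) ^ 4 * F2 := step4

end Aux

theorem stmt4 (a b c : Matrix (Fin 4) (Fin 4) ℤ) (ha : aᵀ = a) (hc : cᵀ = c)
    (hb : b.det ≠ 0) (q : ℕ) [NeZero q]
    (f₁ f₂ : (Fin 4 → ZMod q) → ℂ) (r : (ZMod q)ˣ) :
    ‖Tsum q a b c f₁ f₂ r‖ ≤ (Nat.gcd q b.det.natAbs : ℝ) ^ 2 * l2norm q f₁ * l2norm q f₂ := by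
  classical
  have hq0 : (0 : ℝ) < (q : ℝ) := by
    exact_mod_cast Nat.pos_of_ne_zero (NeZero.ne q)
  set gR : ℝ := (Nat.gcd q b.det.natAbs : ℝ) with hgR
  have hgR0 : 0 ≤ gR := Nat.cast_nonneg _
  set A := a.map (Int.cast : ℤ → ZMod q)
  set B := b.map (Int.cast : ℤ → ZMod q)
  set C := c.map (Int.cast : ℤ → ZMod q)
  set G : (Fin 4 → ZMod q) → ℂ :=
    fun x => ∑ y, f₂ y * ZMod.stdAddChar ((r : ZMod q) * Qform A B C x y) with hG
  set F₁ : ℝ := Real.sqrt (∑ x, ‖f₁ x‖ ^ 2) with hF₁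
  set F₂ : ℝ := Real.sqrt (∑ y, ‖f₂ y‖ ^ 2) with hF₂
  have hF₁0 : 0 ≤ F₁ := Real.sqrt_nonneg _
  have hF₂0 : 0 ≤ F₂ := Real.sqrt_nonneg _
  -- rewrite Tsum in terms of stdAddChar
  have hT : Tsum q a b c f₁ f₂ r
      = (q : ℂ) ^ 2 * ((∑ x : Fin 4 → ZMod q, f₁ x * G x) / (q : ℂ) ^ 8) := by
    rw [Tsum]
    congr 2
    refine Finset.sum_congr rfl fun x _ => ?_
    rw [hG, Finset.mul_sum]
    exact Finset.sum_congr rfl fun y _ => by rw [eZMod_eq_stdAddChar, mul_assoc]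
  -- main estimate
  have main : ‖∑ x : Fin 4 → ZMod q, f₁ x * G x‖ ≤ F₁ * ((q : ℝ) ^ 2 * gR ^ 2 * F₂) := by
    have stepA : ‖∑ x : Fin 4 → ZMod q, f₁ x * G x‖ ≤ ∑ x, ‖f₁ x‖ * ‖G x‖ := by
      refine (norm_sum_le _ _).trans (le_of_eq ?_)
      exact Finset.sum_congr rfl fun x _ => norm_mul _ _
    have stepCS : ∑ x, ‖f₁ x‖ * ‖G x‖ ≤ F₁ * Real.sqrt (∑ x, ‖G x‖ ^ 2) := by
      have hcs := Finset.sum_mul_sq_le_sq_mul_sq Finset.univ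
        (fun x : Fin 4 → ZMod q => ‖f₁ x‖) (fun x => ‖G x‖)
      have h1 := Real.sqrt_le_sqrt hcs
      rw [Real.sqrt_sq (Finset.sum_nonneg fun _ _ =>
          mul_nonneg (norm_nonneg _) (norm_nonneg _)),
        Real.sqrt_mul (Finset.sum_nonneg fun _ _ => sq_nonneg _)] at h1
      exact h1
    have stepB : Real.sqrt (∑ x, ‖G x‖ ^ 2) ≤ (q : ℝ) ^ 2 * gR ^ 2 * F₂ := by
      have hkey := keyB b A C r f₂ (card_ker_le b)
      have h1 := Real.sqrt_le_sqrt hkey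
      have h2 : Real.sqrt ((q : ℝ) ^ 4 * (Nat.gcd q b.det.natAbs : ℝ) ^ 4
          * ∑ y, ‖f₂ y‖ ^ 2) = (q : ℝ) ^ 2 * gR ^ 2 * F₂ := by
        rw [Real.sqrt_mul (by positivity), Real.sqrt_mul (by positivity), hF₂, hgR]
        congr 2
        · rw [show (q : ℝ) ^ 4 = ((q : ℝ) ^ 2) ^ 2 by ring,
            Real.sqrt_sq (by positivity)]
        · rw [show ((Nat.gcd q b.det.natAbs : ℝ)) ^ 4
              = ((Nat.gcd q b.det.natAbs : ℝ) ^ 2) ^ 2 by ring,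
            Real.sqrt_sq (by positivity)]
      rw [h2] at h1
      exact h1
    calc ‖∑ x : Fin 4 → ZMod q, f₁ x * G x‖ ≤ ∑ x, ‖f₁ x‖ * ‖G x‖ := stepA
      _ ≤ F₁ * Real.sqrt (∑ x, ‖G x‖ ^ 2) := stepCS
      _ ≤ F₁ * ((q : ℝ) ^ 2 * gR ^ 2 * F₂) := by
          exact mul_le_mul_of_nonneg_left stepB hF₁0
  -- l2 norms
  have hl2 : ∀ f : (Fin 4 → ZMod q) → ℂ,
      l2norm q f = Real.sqrt (∑ x, ‖f x‖ ^ 2) / (q : ℝ) ^ 2 := by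
    intro f
    rw [l2norm, Real.sqrt_div (Finset.sum_nonneg fun _ _ => sq_nonneg _),
      show (q : ℝ) ^ 4 = ((q : ℝ) ^ 2) ^ 2 by ring, Real.sqrt_sq (by positivity)]
  rw [hT, hl2 f₁, hl2 f₂]
  rw [norm_mul, norm_div, norm_pow, norm_pow, Complex.norm_natCast]
  calc (q : ℝ) ^ 2 * (‖∑ x : Fin 4 → ZMod q, f₁ x * G x‖ / (q : ℝ) ^ 8)
      ≤ (q : ℝ) ^ 2 * ((F₁ * ((q : ℝ) ^ 2 * gR ^ 2 * F₂)) / (q : ℝ) ^ 8) := by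
        refine mul_le_mul_of_nonneg_left ?_ (by positivity)
        exact div_le_div_of_nonneg_right main (by positivity)
    _ = gR ^ 2 * (F₁ / (q : ℝ) ^ 2) * (F₂ / (q : ℝ) ^ 2) := by
        field_simp
end
end

section
/- Let q be odd, squarefree and coprime to det b, and let (ρ, ξ) be any pair satisfying the Weil properties on Sp₈(ℤ/qℤ). Then for all f₁,f₂ : (ℤ/qℤ)⁴ → ℂ and all r ∈ (ℤ/qℤ)*: |T_{f₁,f₂}(r)| = |⟨conj(f₁), ρ(g^{(r)}) f₂⟩|, where g is the symplectic element of Q. -/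
/- STATEMENT 9: exponential sums as matrix coefficients of the Weil representation. -/

open Matrix

noncomputable section

abbrev Msp (R : Type*) := Matrix ((Fin 4) ⊕ (Fin 4)) ((Fin 4) ⊕ (Fin 4)) R

/-- Membership in Sp₈: the block conditions AᵀC = CᵀA, BᵀD = DᵀB, AᵀD − CᵀB = I. -/
def IsSp8 {R : Type*} [CommRing R] (M : Msp R) : Prop :=
  (M.toBlocks₁₁)ᵀ * M.toBlocks₂₁ = (M.toBlocks₂₁)ᵀ * M.toBlocks₁₁ ∧
  (M.toBlocks₁₂)ᵀ * M.toBlocks₂₂ = (M.toBlocks₂₂)ᵀ * M.toBlocks₁₂ ∧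
  (M.toBlocks₁₁)ᵀ * M.toBlocks₂₂ - (M.toBlocks₂₁)ᵀ * M.toBlocks₁₂ = 1

/-- The inner product ⟨f₁,f₂⟩ := 𝔼_x f₁(x) conj(f₂(x)) on ℓ²((ℤ/qℤ)⁴). -/
def innerE (q : ℕ) [NeZero q] (f₁ f₂ : (Fin 4 → ZMod q) → ℂ) : ℂ :=
  (∑ x : Fin 4 → ZMod q, f₁ x * (starRingEnd ℂ) (f₂ x)) / (q : ℂ) ^ 4

/-- s(E) := (E 0; 0 E⁻ᵀ). -/
def sMat {R : Type*} [CommRing R] (E : Matrix (Fin 4) (Fin 4) R) : Msp R :=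
  fromBlocks E 0 0 (Eᵀ)⁻¹

/-- l(W) := (I 0; W I). -/
def lMat {R : Type*} [CommRing R] (W : Matrix (Fin 4) (Fin 4) R) : Msp R :=
  fromBlocks 1 0 W 1

/-- J := (0 I; −I 0). -/
def JMat (R : Type*) [CommRing R] : Msp R := fromBlocks 0 1 (-1) 0

/-- The pair (ρ, ξ) satisfies the Weil properties: ρ is (the restriction to Sp₈(ℤ/qℤ) of)
a unitary representation on ℓ²((ℤ/qℤ)⁴), ξ is unimodular, and the dilation / Fourier /
quadratic modulation formulas hold. -/
def WeilPair (q : ℕ) [NeZero q]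
    (ρ : Msp (ZMod q) → ((Fin 4 → ZMod q) → ℂ) → ((Fin 4 → ZMod q) → ℂ))
    (ξ : Msp (ZMod q) → ℂ) : Prop :=
  (∀ M, IsSp8 M → ‖ξ M‖ = 1) ∧
  (∀ M, IsSp8 M → IsLinearMap ℂ (ρ M)) ∧
  (∀ M, IsSp8 M → ∀ f₁ f₂, innerE q (ρ M f₁) (ρ M f₂) = innerE q f₁ f₂) ∧
  (ρ 1 = id) ∧
  (∀ M N, IsSp8 M → IsSp8 N → ρ (M * N) = ρ M ∘ ρ N) ∧
  (∀ E : Matrix (Fin 4) (Fin 4) (ZMod q), IsUnit E.det →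
    ∀ f x, ρ (sMat E) f x = ξ (sMat E) * f (E⁻¹ *ᵥ x)) ∧
  (∀ f x, ρ (JMat (ZMod q)) f x =
    ξ (JMat (ZMod q)) *
      ((q : ℂ) ^ 2 * ((∑ y : Fin 4 → ZMod q, f y * eZMod q (x ⬝ᵥ y)) / (q : ℂ) ^ 4))) ∧
  (∀ W : Matrix (Fin 4) (Fin 4) (ZMod q), Wᵀ = W →
    ∀ f x, ρ (lMat W) f x =
      ξ (lMat W) * eZMod q (-(Ring.inverse (2 : ZMod q) * (x ⬝ᵥ (W *ᵥ x)))) * f x)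
/-- The symplectic element g = (−2b⁻ᵀc, b⁻ᵀ; 4ab⁻ᵀc − b, −2ab⁻ᵀ) of Q, over ℤ/qℤ. -/
def sympEl (q : ℕ) (a b c : Matrix (Fin 4) (Fin 4) ℤ) : Msp (ZMod q) :=
  fromBlocks
    (-(2 : ZMod q) • (((b.map (Int.cast : ℤ → ZMod q))ᵀ)⁻¹ * c.map (Int.cast : ℤ → ZMod q)))
    (((b.map (Int.cast : ℤ → ZMod q))ᵀ)⁻¹)
    ((4 : ZMod q) • (a.map (Int.cast : ℤ → ZMod q) * ((b.map (Int.cast : ℤ → ZMod q))ᵀ)⁻¹ *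
        c.map (Int.cast : ℤ → ZMod q)) - b.map (Int.cast : ℤ → ZMod q))
    (-(2 : ZMod q) • (a.map (Int.cast : ℤ → ZMod q) * ((b.map (Int.cast : ℤ → ZMod q))ᵀ)⁻¹))

/-- The dilate g^{(r)} := (A r⁻¹B; rC D) of a block matrix g = (A B; C D). -/
def dil (q : ℕ) (r : (ZMod q)ˣ) (M : Msp (ZMod q)) : Msp (ZMod q) :=
  fromBlocks M.toBlocks₁₁ (((r⁻¹ : (ZMod q)ˣ) : ZMod q) • M.toBlocks₁₂)
    ((r : ZMod q) • M.toBlocks₂₁) M.toBlocks₂₂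

section Helpers

variable {R : Type*} [CommRing R]

lemma isSp8_iff (M : Msp R) : IsSp8 M ↔ Mᵀ * JMat R * M = JMat R := by
  obtain ⟨A, B, C, D, hM⟩ : ∃ A B C D, M = fromBlocks A B C D :=
    ⟨_, _, _, _, (fromBlocks_toBlocks M).symm⟩
  subst hM
  simp only [IsSp8, toBlocks_fromBlocks₁₁, toBlocks_fromBlocks₁₂, toBlocks_fromBlocks₂₁,
    toBlocks_fromBlocks₂₂, JMat, fromBlocks_transpose, fromBlocks_multiply]
  simp only [Matrix.mul_zero, Matrix.mul_one, Matrix.mul_neg, Matrix.zero_mul, Matrix.one_mul,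
    Matrix.neg_mul, zero_add, add_zero, fromBlocks_inj]
  constructor
  · rintro ⟨h1, h2, h3⟩
    have h4 := congrArg Matrix.transpose h3
    simp only [transpose_sub, transpose_mul, transpose_transpose, transpose_one] at h4
    refine ⟨by rw [h1]; abel, by rw [← h3]; abel, by rw [← h4]; abel, by rw [h2]; abel⟩
  · rintro ⟨h1, h2, h3, h4⟩
    refine ⟨by rw [neg_add_eq_zero] at h1; exact h1.symm,
      by rw [neg_add_eq_zero] at h4; exact h4.symm, by rw [← h2]; abel⟩

lemma isSp8_mul {M N : Msp R} (hM : IsSp8 M) (hN : IsSp8 N) : IsSp8 (M * N) := by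
  rw [isSp8_iff] at *
  calc (M * N)ᵀ * JMat R * (M * N) = Nᵀ * (Mᵀ * JMat R * M) * N := by
        rw [transpose_mul]; noncomm_ring
    _ = JMat R := by rw [hM, hN]

lemma isSp8_lMat {W : Matrix (Fin 4) (Fin 4) R} (hW : Wᵀ = W) : IsSp8 (lMat W) := by
  refine ⟨?_, ?_, ?_⟩ <;>
  simp [lMat, toBlocks_fromBlocks₁₁, toBlocks_fromBlocks₁₂, toBlocks_fromBlocks₂₁,
    toBlocks_fromBlocks₂₂, hW]

lemma isSp8_sMat {E : Matrix (Fin 4) (Fin 4) R} (hE : IsUnit E.det) : IsSp8 (sMat E) := by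
  refine ⟨?_, ?_, ?_⟩ <;>
  simp [sMat, toBlocks_fromBlocks₁₁, toBlocks_fromBlocks₁₂, toBlocks_fromBlocks₂₁,
    toBlocks_fromBlocks₂₂, mul_nonsing_inv _ (by rwa [det_transpose] : IsUnit (Eᵀ).det)]

lemma isSp8_JMat : IsSp8 (JMat R) := by
  refine ⟨?_, ?_, ?_⟩ <;>
  simp [JMat, toBlocks_fromBlocks₁₁, toBlocks_fromBlocks₁₂, toBlocks_fromBlocks₂₁,
    toBlocks_fromBlocks₂₂]

end Helpers

lemma eZMod_add (q : ℕ) [NeZero q] (s t : ZMod q) :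
    eZMod q (s + t) = eZMod q s * eZMod q t := by
  have hq : (q : ℂ) ≠ 0 := Nat.cast_ne_zero.mpr (NeZero.ne q)
  rw [eZMod, eZMod, eZMod, ← Complex.exp_add]
  have hv : s.val + t.val = (s + t).val + q * ((s.val + t.val) / q) := by
    rw [ZMod.val_add]; exact (Nat.mod_add_div _ _).symm
  have hvc : (s.val : ℂ) + t.val = ((s + t).val : ℂ) + q * ((s.val + t.val) / q : ℕ) := by
    exact_mod_cast congrArg (Nat.cast : ℕ → ℂ) hv
  have gen : ∀ x y z w : ℂ, x + y = z + (q : ℂ) * w →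
      2 * Real.pi * Complex.I * x / q + 2 * Real.pi * Complex.I * y / q
        = 2 * Real.pi * Complex.I * z / q + w * (2 * Real.pi * Complex.I) := by
    intro x y z w h
    field_simp
    linear_combination h
  rw [gen _ _ _ _ hvc, Complex.exp_add,
    show ((((s.val + t.val) / q : ℕ)) : ℂ) = ((((s.val + t.val) / q : ℕ) : ℤ) : ℂ) from
      (Int.cast_natCast _).symm,
    Complex.exp_int_mul_two_pi_mul_I, mul_one]

lemma isUnit_two (q : ℕ) [NeZero q] (hodd : Odd q) : IsUnit (2 : ZMod q) := by
  have := (ZMod.isUnit_iff_coprime 2 q).mpr (Nat.coprime_two_left.mpr hodd)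
  simpa using this

lemma isUnit_detmap (q : ℕ) [NeZero q] (b : Matrix (Fin 4) (Fin 4) ℤ)
    (hco : Nat.Coprime q b.det.natAbs) :
    IsUnit (b.map (Int.cast : ℤ → ZMod q)).det := by
  have h1 : (b.map (Int.cast : ℤ → ZMod q)).det = ((b.det : ℤ) : ZMod q) := by
    exact (RingHom.map_det (Int.castRingHom (ZMod q)) b).symm
  have h2 : IsUnit ((b.det.natAbs : ZMod q)) :=
    (ZMod.isUnit_iff_coprime _ q).mpr hco.symm
  rw [h1]
  rcases Int.natAbs_eq b.det with h | h <;> rw [h]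
  · rw [Int.cast_natCast]; exact h2
  · rw [Int.cast_neg, Int.cast_natCast]; exact h2.neg

lemma Einv (q : ℕ) (r : (ZMod q)ˣ) (B : Matrix (Fin 4) (Fin 4) (ZMod q))
    (hB : IsUnit B.det) :
    ((((r⁻¹ : (ZMod q)ˣ) : ZMod q) • (Bᵀ)⁻¹)⁻¹) = (r : ZMod q) • Bᵀ := by
  apply inv_eq_right_inv
  rw [Matrix.smul_mul, Matrix.mul_smul, smul_smul,
    nonsing_inv_mul _ (by rwa [det_transpose] : IsUnit (Bᵀ).det)]
  norm_cast
  rw [inv_mul_cancel]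
  simp

lemma Edet (q : ℕ) (r : (ZMod q)ˣ) (B : Matrix (Fin 4) (Fin 4) (ZMod q))
    (hB : IsUnit B.det) :
    IsUnit ((((r⁻¹ : (ZMod q)ˣ) : ZMod q) • (Bᵀ)⁻¹)).det := by
  have h : (((r⁻¹ : (ZMod q)ˣ) : ZMod q) • (Bᵀ)⁻¹) * ((r : ZMod q) • Bᵀ) = 1 := by
    rw [Matrix.smul_mul, Matrix.mul_smul, smul_smul,
      nonsing_inv_mul _ (by rwa [det_transpose] : IsUnit (Bᵀ).det)]
    norm_cast
    rw [inv_mul_cancel]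
    simp
  have h2 := congrArg Matrix.det h
  rw [det_mul, det_one] at h2
  exact IsUnit.of_mul_eq_one _ h2

lemma factor (q : ℕ) [NeZero q] (a b c : Matrix (Fin 4) (Fin 4) ℤ)
    (hB : IsUnit (b.map (Int.cast : ℤ → ZMod q)).det) (r : (ZMod q)ˣ) :
    dil q r (sympEl q a b c) =
      lMat ((-(2 * (r : ZMod q))) • a.map (Int.cast : ℤ → ZMod q)) *
        (sMat (((r⁻¹ : (ZMod q)ˣ) : ZMod q) • ((b.map (Int.cast : ℤ → ZMod q))ᵀ)⁻¹) *
          (JMat (ZMod q) * lMat ((-(2 * (r : ZMod q))) • c.map (Int.cast : ℤ → ZMod q)))) := by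
  set A := a.map (Int.cast : ℤ → ZMod q)
  set B := b.map (Int.cast : ℤ → ZMod q)
  set C := c.map (Int.cast : ℤ → ZMod q)
  have hrr : ((r⁻¹ : (ZMod q)ˣ) : ZMod q) * (r : ZMod q) = 1 := by
    norm_cast; rw [inv_mul_cancel]; simp
  have hET : (((((r⁻¹ : (ZMod q)ˣ) : ZMod q) • (Bᵀ)⁻¹))ᵀ)⁻¹ = (r : ZMod q) • B := by
    rw [transpose_smul, transpose_nonsing_inv, transpose_transpose]
    apply inv_eq_right_inv
    rw [Matrix.smul_mul, Matrix.mul_smul, smul_smul, nonsing_inv_mul _ hB, hrr, one_smul]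
  rw [dil, sympEl, lMat, sMat, JMat, lMat, hET]
  simp only [toBlocks_fromBlocks₁₁, toBlocks_fromBlocks₁₂, toBlocks_fromBlocks₂₁,
    toBlocks_fromBlocks₂₂, fromBlocks_multiply]
  simp only [Matrix.mul_zero, Matrix.mul_one, Matrix.zero_mul, Matrix.one_mul,
    Matrix.mul_neg, Matrix.neg_mul, zero_add, add_zero, Matrix.smul_mul, Matrix.mul_smul,
    smul_smul, smul_zero, neg_zero, Matrix.mul_one]
  have hrr2 : (r : ZMod q) * ((r⁻¹ : (ZMod q)ˣ) : ZMod q) = 1 := by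
    norm_cast; rw [mul_inv_cancel]; simp
  have e1 : (-(2 * (r : ZMod q)) * ((r⁻¹ : (ZMod q)ˣ) : ZMod q)) = (-2 : ZMod q) := by
    linear_combination (-2 : ZMod q) * hrr2
  have e2 : (((r⁻¹ : (ZMod q)ˣ) : ZMod q) * -(2 * (r : ZMod q))) = (-2 : ZMod q) := by
    linear_combination (-2 : ZMod q) * hrr
  have e3 : ((-2 : ZMod q) * -(2 * (r : ZMod q))) = (r : ZMod q) * 4 := by ring
  rw [e1, e2, e3, smul_sub, smul_smul, Matrix.mul_assoc, ← sub_eq_add_neg]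

theorem stmt9 (a b c : Matrix (Fin 4) (Fin 4) ℤ) (ha : aᵀ = a) (hc : cᵀ = c)
    (hb : b.det ≠ 0) (q : ℕ) [NeZero q] (hodd : Odd q) (hsf : Squarefree q)
    (hco : Nat.Coprime q b.det.natAbs) :
    (∀ r : (ZMod q)ˣ, IsSp8 (dil q r (sympEl q a b c))) ∧
    ∀ ρ ξ, WeilPair q ρ ξ →
      ∀ (f₁ f₂ : (Fin 4 → ZMod q) → ℂ) (r : (ZMod q)ˣ),
        ‖Tsum q a b c f₁ f₂ r‖ =
          ‖innerE q (fun x => (starRingEnd ℂ) (f₁ x))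
            (ρ (dil q r (sympEl q a b c)) f₂)‖ := by
  have hBu : IsUnit (b.map (Int.cast : ℤ → ZMod q)).det := isUnit_detmap q b hco
  have h2 : IsUnit (2 : ZMod q) := isUnit_two q hodd
  have hq0 : (q : ℂ) ≠ 0 := Nat.cast_ne_zero.mpr (NeZero.ne q)
  have hAsymm : (a.map (Int.cast : ℤ → ZMod q))ᵀ = a.map (Int.cast : ℤ → ZMod q) := by
    rw [← Matrix.transpose_map, ha]
  have hCsymm : (c.map (Int.cast : ℤ → ZMod q))ᵀ = c.map (Int.cast : ℤ → ZMod q) := by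
    rw [← Matrix.transpose_map, hc]
  -- symmetry of the quadratic modulation matrices
  have hWaT : ∀ r : (ZMod q)ˣ, ((-(2 * (r : ZMod q))) • a.map (Int.cast : ℤ → ZMod q))ᵀ
      = (-(2 * (r : ZMod q))) • a.map (Int.cast : ℤ → ZMod q) := fun r => by
    rw [transpose_smul, hAsymm]
  have hWcT : ∀ r : (ZMod q)ˣ, ((-(2 * (r : ZMod q))) • c.map (Int.cast : ℤ → ZMod q))ᵀ
      = (-(2 * (r : ZMod q))) • c.map (Int.cast : ℤ → ZMod q) := fun r => by
    rw [transpose_smul, hCsymm]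
  have hsp : ∀ r : (ZMod q)ˣ, IsSp8 (dil q r (sympEl q a b c)) := by
    intro r
    rw [factor q a b c hBu r]
    exact isSp8_mul (isSp8_lMat (hWaT r))
      (isSp8_mul (isSp8_sMat (Edet q r _ hBu)) (isSp8_mul isSp8_JMat (isSp8_lMat (hWcT r))))
  refine ⟨hsp, ?_⟩
  intro ρ ξ hW f₁ f₂ r
  obtain ⟨hξ, hlin, hinner, hone, hmul, hs, hJ, hl⟩ := hW
  have h21 : Ring.inverse (2 : ZMod q) * 2 = 1 := Ring.inverse_mul_cancel _ h2
  -- the quadratic modulation exponent simplification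
  have hquad : ∀ (M : Matrix (Fin 4) (Fin 4) (ZMod q)) (x : Fin 4 → ZMod q),
      -(Ring.inverse (2 : ZMod q) * (x ⬝ᵥ (((-(2 * (r : ZMod q))) • M) *ᵥ x)))
        = (r : ZMod q) * (x ⬝ᵥ (M *ᵥ x)) := by
    intro M x
    rw [smul_mulVec, dotProduct_smul, smul_eq_mul]
    linear_combination ((r : ZMod q) * (x ⬝ᵥ (M *ᵥ x))) * h21
  -- the Fourier phase
  have hdot : ∀ x y : Fin 4 → ZMod q,
      ((((r : ZMod q) • (b.map (Int.cast : ℤ → ZMod q))ᵀ) *ᵥ x) ⬝ᵥ y)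
        = (r : ZMod q) * (x ⬝ᵥ (b.map (Int.cast : ℤ → ZMod q) *ᵥ y)) := by
    intro x y
    rw [smul_mulVec, smul_dotProduct, smul_eq_mul, mulVec_transpose,
      ← dotProduct_mulVec]
  -- splitting of the representation along the factorization
  have sp2 : IsSp8 (sMat (((r⁻¹ : (ZMod q)ˣ) : ZMod q) • ((b.map (Int.cast : ℤ → ZMod q))ᵀ)⁻¹)) :=
    isSp8_sMat (Edet q r _ hBu)
  have sp4 : IsSp8 (lMat ((-(2 * (r : ZMod q))) • c.map (Int.cast : ℤ → ZMod q))) :=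
    isSp8_lMat (hWcT r)
  have hsplit : ρ (dil q r (sympEl q a b c)) f₂ =
      ρ (lMat ((-(2 * (r : ZMod q))) • a.map (Int.cast : ℤ → ZMod q)))
        (ρ (sMat (((r⁻¹ : (ZMod q)ˣ) : ZMod q) • ((b.map (Int.cast : ℤ → ZMod q))ᵀ)⁻¹))
          (ρ (JMat (ZMod q))
            (ρ (lMat ((-(2 * (r : ZMod q))) • c.map (Int.cast : ℤ → ZMod q))) f₂))) := by
    rw [factor q a b c hBu r,
      hmul _ _ (isSp8_lMat (hWaT r)) (isSp8_mul sp2 (isSp8_mul isSp8_JMat sp4)),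
      Function.comp_apply, hmul _ _ sp2 (isSp8_mul isSp8_JMat sp4), Function.comp_apply,
      hmul _ _ isSp8_JMat sp4, Function.comp_apply]
  -- pointwise formula for the matrix coefficient vector
  have hF : ∀ x, ρ (dil q r (sympEl q a b c)) f₂ x =
      ξ (lMat ((-(2 * (r : ZMod q))) • a.map (Int.cast : ℤ → ZMod q)))
        * eZMod q ((r : ZMod q) * (x ⬝ᵥ (a.map (Int.cast : ℤ → ZMod q) *ᵥ x)))
        * (ξ (sMat (((r⁻¹ : (ZMod q)ˣ) : ZMod q) • ((b.map (Int.cast : ℤ → ZMod q))ᵀ)⁻¹))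
          * (ξ (JMat (ZMod q)) * ((q : ℂ) ^ 2 *
            ((∑ y : Fin 4 → ZMod q,
              (ξ (lMat ((-(2 * (r : ZMod q))) • c.map (Int.cast : ℤ → ZMod q)))
                * eZMod q ((r : ZMod q) * (y ⬝ᵥ (c.map (Int.cast : ℤ → ZMod q) *ᵥ y))) * f₂ y)
              * eZMod q ((r : ZMod q) * (x ⬝ᵥ (b.map (Int.cast : ℤ → ZMod q) *ᵥ y))))
              / (q : ℂ) ^ 4)))) := by
    intro x
    rw [hsplit, hl _ (hWaT r), hquad, hs _ (Edet q r _ hBu), Einv q r _ hBu, hJ]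
    rw [show (∑ y : Fin 4 → ZMod q,
        (ρ (lMat ((-(2 * (r : ZMod q))) • c.map (Int.cast : ℤ → ZMod q))) f₂) y
          * eZMod q ((((r : ZMod q) • (b.map (Int.cast : ℤ → ZMod q))ᵀ) *ᵥ x) ⬝ᵥ y))
        = ∑ y : Fin 4 → ZMod q,
          (ξ (lMat ((-(2 * (r : ZMod q))) • c.map (Int.cast : ℤ → ZMod q)))
            * eZMod q ((r : ZMod q) * (y ⬝ᵥ (c.map (Int.cast : ℤ → ZMod q) *ᵥ y))) * f₂ y)
          * eZMod q ((r : ZMod q) * (x ⬝ᵥ (b.map (Int.cast : ℤ → ZMod q) *ᵥ y)))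
      from Finset.sum_congr rfl fun y _ => by rw [hl _ (hWcT r), hquad, hdot]]
  -- splitting of the character along the quadratic form
  have hQsplit : ∀ x y : Fin 4 → ZMod q,
      eZMod q ((r : ZMod q) * Qform (a.map (Int.cast : ℤ → ZMod q))
          (b.map (Int.cast : ℤ → ZMod q)) (c.map (Int.cast : ℤ → ZMod q)) x y)
        = eZMod q ((r : ZMod q) * (x ⬝ᵥ (a.map (Int.cast : ℤ → ZMod q) *ᵥ x)))
          * eZMod q ((r : ZMod q) * (x ⬝ᵥ (b.map (Int.cast : ℤ → ZMod q) *ᵥ y)))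
          * eZMod q ((r : ZMod q) * (y ⬝ᵥ (c.map (Int.cast : ℤ → ZMod q) *ᵥ y))) := by
    intro x y
    rw [Qform, mul_add, mul_add, eZMod_add, eZMod_add]
  set Ξ : ℂ := ξ (lMat ((-(2 * (r : ZMod q))) • a.map (Int.cast : ℤ → ZMod q)))
    * ξ (sMat (((r⁻¹ : (ZMod q)ˣ) : ZMod q) • ((b.map (Int.cast : ℤ → ZMod q))ᵀ)⁻¹))
    * ξ (JMat (ZMod q))
    * ξ (lMat ((-(2 * (r : ZMod q))) • c.map (Int.cast : ℤ → ZMod q))) with hΞ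
  have key : innerE q (fun x => (starRingEnd ℂ) (f₁ x)) (ρ (dil q r (sympEl q a b c)) f₂)
      = (starRingEnd ℂ) (Ξ * Tsum q a b c f₁ f₂ r) := by
    rw [innerE, show (∑ x : Fin 4 → ZMod q,
        (starRingEnd ℂ) (f₁ x) * (starRingEnd ℂ) (ρ (dil q r (sympEl q a b c)) f₂ x))
        = (starRingEnd ℂ) (∑ x : Fin 4 → ZMod q, f₁ x * ρ (dil q r (sympEl q a b c)) f₂ x)
      from by rw [map_sum]; exact Finset.sum_congr rfl fun x _ => (_root_.map_mul _ _ _).symm]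
    rw [show ((q : ℂ) ^ 4) = (starRingEnd ℂ) ((q : ℂ) ^ 4) from by
        rw [_root_.map_pow, Complex.conj_natCast], ← map_div₀]
    congr 1
    rw [Tsum, hΞ]
    simp only [hF, hQsplit]
    simp only [Finset.sum_div, Finset.mul_sum, Finset.sum_mul]
    refine Finset.sum_congr rfl fun x _ => Finset.sum_congr rfl fun y _ => ?_
    field_simp
  have habsΞ : ‖Ξ‖ = 1 := by
    rw [hΞ, norm_mul, norm_mul, norm_mul,
      hξ _ (isSp8_lMat (hWaT r)), hξ _ sp2, hξ _ isSp8_JMat, hξ _ sp4]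
    norm_num
  rw [key, Complex.norm_conj, norm_mul, habsΞ, one_mul]
end
end
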